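/- Let X be a path connected metrizable space with basepoint p. If the topological fundamental group π₁(X,p) is discrete, then X is semilocally simply connected (at every point). -/

import Mathlib

open Topology Filter unitInterval

instance ZerothHomotopy.instTopologicalSpace' (X : Type*) [TopologicalSpace X] :
    TopologicalSpace (ZerothHomotopy X) :=
  inferInstanceAs (TopologicalSpace (Quotient _))

/-- `X` is semilocally simply connected at `p`: some open neighborhood `U` of `p` is such
that every loop at `p` contained in `U` is null-homotopic (rel endpoints) in `X`. -/
def SemilocallySimplyConnectedAt (X : Type*) [TopologicalSpace X] (p : X) : Prop :=
  ∃ U : Set X, IsOpen U ∧ p ∈ U ∧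
    ∀ γ : Path p p, (∀ t, γ t ∈ U) → γ.Homotopic (Path.refl p)

/-- Two paths are joined in the path space iff they are homotopic rel endpoints. -/
lemma joined_iff_homotopic {X : Type*} [TopologicalSpace X] {x₀ x₁ : X}
    (γ δ : Path x₀ x₁) : Joined γ δ ↔ γ.Homotopic δ := by
  constructor
  · rintro ⟨F⟩
    exact ⟨{ toFun := fun st => F st.1 st.2
             continuous_toFun := Path.continuous_uncurry_iff.mpr F.continuous
             map_zero_left := fun t => by simp
             map_one_left := fun t => by simp
             prop' := fun s t ht => by
               rcases ht with ht | ht <;> subst ht <;> simp }⟩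
  · rintro ⟨H⟩
    exact ⟨{ toFun := H.eval
             continuous_toFun := Path.continuous_uncurry_iff.mp H.continuous
             source' := H.eval_zero
             target' := H.eval_one }⟩

private lemma conj_cancel {X : Type*} [TopologicalSpace X] {p x : X} (α : Path p x)
    (γ : Path x x) (h : (α.trans (γ.trans α.symm)).Homotopic (Path.refl p)) :
    γ.Homotopic (Path.refl x) := by
  have assoc : ∀ {a b c d : X} (u : Path a b) (v : Path b c) (w : Path c d),
      ((u.trans v).trans w).Homotopic (u.trans (v.trans w)) :=
    fun u v w => ⟨Path.Homotopy.transAssoc u v w⟩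
  have h2 : (α.symm.trans ((α.trans (γ.trans α.symm)).trans α)).Homotopic
      (α.symm.trans ((Path.refl p).trans α)) :=
    Path.Homotopic.hcomp (Path.Homotopic.refl _) (Path.Homotopic.hcomp h (Path.Homotopic.refl _))
  have inner : ((γ.trans α.symm).trans α).Homotopic γ :=
    ((assoc γ α.symm α).trans
      (Path.Homotopic.hcomp (Path.Homotopic.refl γ)
        ⟨(Path.Homotopy.reflSymmTrans α).symm⟩)).trans ⟨Path.Homotopy.transRefl γ⟩
  have step1 : ((α.trans (γ.trans α.symm)).trans α).Homotopic (α.trans γ) :=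
    (assoc α (γ.trans α.symm) α).trans (Path.Homotopic.hcomp (Path.Homotopic.refl α) inner)
  have hL : (α.symm.trans ((α.trans (γ.trans α.symm)).trans α)).Homotopic γ :=
    (((Path.Homotopic.hcomp (Path.Homotopic.refl α.symm) step1).trans
        (assoc α.symm α γ).symm).trans
      (Path.Homotopic.hcomp ⟨(Path.Homotopy.reflSymmTrans α).symm⟩
        (Path.Homotopic.refl γ))).trans ⟨Path.Homotopy.reflTrans γ⟩
  have hR : (α.symm.trans ((Path.refl p).trans α)).Homotopic (Path.refl x) :=
    (Path.Homotopic.hcomp (Path.Homotopic.refl α.symm)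
      ⟨Path.Homotopy.reflTrans α⟩).trans ⟨(Path.Homotopy.reflSymmTrans α).symm⟩
  exact (hL.symm.trans h2).trans hR

theorem stmt10 {X : Type*} [TopologicalSpace X] [TopologicalSpace.MetrizableSpace X]
    [PathConnectedSpace X] (p : X)
    (h : DiscreteTopology (ZerothHomotopy (Path p p))) :
    ∀ x : X, SemilocallySimplyConnectedAt X x := by
  letI : MetricSpace X := TopologicalSpace.metrizableSpaceMetric X
  letI := pathSetoid (Path p p)
  intro x
  obtain ⟨α⟩ : Joined p x := PathConnectedSpace.joined p x
  set ζ : Path p p := α.trans ((Path.refl x).trans α.symm) with hζdef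
  have hζ : ζ.Homotopic (Path.refl p) :=
    (Path.Homotopic.hcomp (Path.Homotopic.refl α) ⟨Path.Homotopy.reflTrans α.symm⟩).trans
      ⟨(Path.Homotopy.reflTransSymm α).symm⟩
  -- The set of null-homotopic loops is open
  haveI hdisc : DiscreteTopology (Quotient (pathSetoid (Path p p))) := h
  have hSopen : IsOpen {η : Path p p | η.Homotopic (Path.refl p)} := by
    have : IsOpen ((Quotient.mk' : Path p p → ZerothHomotopy (Path p p)) ⁻¹'
        {Quotient.mk' (Path.refl p)}) :=
      (isOpen_discrete _).preimage continuous_quotient_mk'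
    convert this using 1
    ext η
    simp only [Set.mem_setOf_eq, Set.mem_preimage, Set.mem_singleton_iff, Quotient.eq']
    exact ⟨fun hh => (joined_iff_homotopic _ _).mpr hh, fun hh => (joined_iff_homotopic _ _).mp hh⟩
  -- ζ is in this open set; get an ε-ball around it in C(I, X)
  rw [isOpen_induced_iff] at hSopen
  obtain ⟨O, hO, hOS⟩ := hSopen
  have hζO : ζ.toContinuousMap ∈ O := by
    have : ζ ∈ ((↑) : Path p p → C(I, X)) ⁻¹' O := hOS ▸ hζ
    exact this
  obtain ⟨ε, hε, hball⟩ := Metric.isOpen_iff.mp hO _ hζO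
  refine ⟨Metric.ball x (ε / 2), Metric.isOpen_ball, Metric.mem_ball_self (by linarith), ?_⟩
  intro γ hγ
  set η : Path p p := α.trans (γ.trans α.symm) with hηdef
  have hdist : ∀ t : I, dist (η t) (ζ t) ≤ ε / 2 := by
    intro t
    rw [hηdef, hζdef]
    simp only [Path.trans_apply]
    split_ifs with h1 h2
    · simp only [dist_self]; positivity
    · simpa using le_of_lt (Metric.mem_ball.mp (hγ _))
    · simp only [dist_self]; positivity
  have hdlt : dist η.toContinuousMap ζ.toContinuousMap < ε := by
    have hle : dist η.toContinuousMap ζ.toContinuousMap ≤ ε / 2 :=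
      (ContinuousMap.dist_le (by linarith)).mpr fun t => hdist t
    linarith
  have hηS : η ∈ ((↑) : Path p p → C(I, X)) ⁻¹' O :=
    hball (Metric.mem_ball.mpr hdlt)
  have hηnull : η.Homotopic (Path.refl p) := by
    have : η ∈ {η : Path p p | η.Homotopic (Path.refl p)} := hOS ▸ hηS
    exact this
  exact conj_cancel α γ hηnull
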